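/- Let G be a subset of a finite orthonormal basis B closed under the string edit maps of both U and its adjoint U†. Then the orthogonal projection P_G onto span(G) commutes with U. -/

import Mathlib

/-- if `G` is closed under the string edit maps of both `U` and `U†`,
then the orthogonal projection `P_G` onto `span G` commutes with `U`. -/
theorem closed_subset_projection_commutes
    {H : Type*} [NormedAddCommGroup H] [InnerProductSpace ℂ H] [FiniteDimensional ℂ H]
    [CompleteSpace H]
    {ι : Type*} [Fintype ι]
    (B : OrthonormalBasis ι ℂ H) (G : Finset ι)
    (U P : H →L[ℂ] H)
    (hU : U ∈ unitary (H →L[ℂ] H))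
    (hP : ∀ x : H, P x = ∑ i ∈ G, (inner ℂ (B i) x : ℂ) • B i)
    (hclosed : ∀ b ∈ G, ∀ b' : ι,
      ((inner ℂ (B b') (U (B b)) : ℂ) ≠ 0 ∨
        (inner ℂ (B b') ((ContinuousLinearMap.adjoint U) (B b)) : ℂ) ≠ 0) → b' ∈ G) :
    P ∘L U = U ∘L P := by
  classical
  have hite : ∀ i j : ι, (inner ℂ (B i) (B j) : ℂ) = if i = j then 1 else 0 :=
    orthonormal_iff_ite.mp B.orthonormal
  have hPB : ∀ j : ι, P (B j) = if j ∈ G then B j else 0 := by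
    intro j
    rw [hP]
    split_ifs with hj
    · rw [Finset.sum_eq_single j]
      · rw [hite, if_pos rfl, one_smul]
      · intro i _ hij
        rw [hite, if_neg hij, zero_smul]
      · exact fun h => absurd hj h
    · apply Finset.sum_eq_zero
      intro i hi
      rw [hite, if_neg (fun h : i = j => hj (h ▸ hi)), zero_smul]
  have key : ∀ j : ι, P (U (B j)) = U (P (B j)) := by
    intro j
    by_cases hj : j ∈ G
    · rw [hPB, if_pos hj, hP]
      conv_rhs => rw [← B.sum_repr' (U (B j))]
      refine Finset.sum_subset G.subset_univ ?_
      intro i _ hiG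
      by_cases h : (inner ℂ (B i) (U (B j)) : ℂ) = 0
      · rw [h, zero_smul]
      · exact absurd (hclosed j hj i (Or.inl h)) hiG
    · rw [hPB, if_neg hj, map_zero, hP]
      apply Finset.sum_eq_zero
      intro i hi
      by_cases h : (inner ℂ (B i) (U (B j)) : ℂ) = 0
      · rw [h, zero_smul]
      · exfalso
        apply hj
        apply hclosed i hi j
        right
        rw [ContinuousLinearMap.adjoint_inner_right]
        intro hz
        exact h (by rw [← inner_conj_symm, hz, map_zero])
  refine ContinuousLinearMap.coe_injective (B.toBasis.ext fun j => ?_)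
  simpa using key j
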